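/- Spread periodicity: Fix an odd prime p and s ∈ 𝔽ₚ. There exists a positive integer m dividing p-1 or p+1 such that for all n ∈ ℕ, Sₙ(s) = 0 in 𝔽ₚ if and only if m divides n. -/
import Mathlib

def spread {F : Type*} [Field F] : ℕ → F → F
  | 0, _ => 0
  | 1, s => s
  | (n + 2), s => 2 * (1 - 2 * s) * spread (n + 1) s - spread n s + 2 * s

theorem spread_periodicity (p : ℕ) (hp : p.Prime) (hodd : p ≠ 2)
    [Fact p.Prime] (s : ZMod p) :
    ∃ m : ℕ, 0 < m ∧ (m ∣ p - 1 ∨ m ∣ p + 1) ∧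
      ∀ n : ℕ, spread n s = 0 ↔ m ∣ n := by
  classical
  let φ : ZMod p →+* GaloisField p 2 := algebraMap (ZMod p) (GaloisField p 2)
  have hinj : Function.Injective φ := φ.injective
  have hp3 : 3 ≤ p := by have := hp.two_le; omega
  have h2K : (2 : GaloisField p 2) ≠ 0 := by
    have : ((2 : ℕ) : GaloisField p 2) ≠ 0 := by
      rw [Ne, CharP.cast_eq_zero_iff (GaloisField p 2) p]
      intro h
      have := Nat.le_of_dvd (by norm_num) h
      omega
    simpa using this
  -- square root of s^2 - s
  letI : Fintype (GaloisField p 2) := Fintype.ofFinite _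
  obtain ⟨r, hr⟩ : ∃ r : GaloisField p 2, r * r = φ (s ^ 2 - s) := by
    by_cases hd : φ (s ^ 2 - s) = 0
    · exact ⟨0, by simp [hd]⟩
    · have hd' : s ^ 2 - s ≠ 0 := fun h => hd (by simp [h])
      have hsq : IsSquare (φ (s ^ 2 - s)) := by
        have hringchar : ringChar (GaloisField p 2) ≠ 2 := by
          rw [ringChar.eq (GaloisField p 2) p]; exact hodd
        rw [FiniteField.isSquare_iff hringchar hd]
        obtain ⟨k, hk⟩ := hp.odd_of_ne_two hodd
        have hcard : Fintype.card (GaloisField p 2) = p ^ 2 := by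
          rw [← Nat.card_eq_fintype_card]
          exact GaloisField.card p 2 (by norm_num)
        have harith : Fintype.card (GaloisField p 2) / 2 = (p - 1) * ((p + 1) / 2) := by
          rw [hcard]
          subst hk
          have h1 : (2 * k + 1) ^ 2 = (2 * k ^ 2 + 2 * k) * 2 + 1 := by ring
          have h2 : (2 * k + 1 - 1) * ((2 * k + 1 + 1) / 2) = 2 * k ^ 2 + 2 * k := by
            have h3 : (2 * k + 1 + 1) / 2 = k + 1 := by omega
            rw [h3, show 2 * k + 1 - 1 = 2 * k from by omega]; ring
          rw [h1, h2]
          omega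
        rw [harith, pow_mul, ← map_pow, ZMod.pow_card_sub_one_eq_one hd', map_one, one_pow]
      obtain ⟨t, ht⟩ := hsq
      exact ⟨t, ht.symm⟩
  set c : GaloisField p 2 := φ (1 - 2 * s) with hc
  set σ : GaloisField p 2 := φ s with hσ
  have hcσ : c = 1 - 2 * σ := by
    rw [hc, hσ, map_sub, map_mul, map_one, map_ofNat]
  set x : GaloisField p 2 := c + 2 * r with hxdef
  set x' : GaloisField p 2 := c - 2 * r with hx'def
  have hc2 : c ^ 2 = 4 * φ (s ^ 2 - s) + 1 := by
    have h1 : ((1 : ZMod p) - 2 * s) ^ 2 = 4 * (s ^ 2 - s) + 1 := by ring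
    rw [hc, ← map_pow, h1, map_add, map_mul, map_one, map_ofNat]
  have hxx' : x * x' = 1 := by
    have h : x * x' = c ^ 2 - 4 * (r * r) := by rw [hxdef, hx'def]; ring
    rw [h, hr, hc2]; ring
  have hx0 : x ≠ 0 := fun h => by simp [h] at hxx'
  have hx2 : x ^ 2 = 2 * (1 - 2 * σ) * x - 1 := by
    rw [hxdef, ← hcσ]
    linear_combination 4 * hr - hc2
  -- key identity
  have key : ∀ n, φ (spread n s) * (4 * x ^ n) = -(x ^ n - 1) ^ 2 := by
    have main : ∀ n, φ (spread n s) * (4 * x ^ n) = -(x ^ n - 1) ^ 2 ∧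
        φ (spread (n + 1) s) * (4 * x ^ (n + 1)) = -(x ^ (n + 1) - 1) ^ 2 := by
      intro n
      induction n with
      | zero =>
        constructor
        · simp [spread]
        · rw [show spread 1 s = s from rfl, ← hσ]
          linear_combination hx2
      | succ k ih =>
        obtain ⟨ih0, ih1⟩ := ih
        refine ⟨ih1, ?_⟩
        have hφ : φ (spread (k + 2) s) =
            2 * (1 - 2 * σ) * φ (spread (k + 1) s) - φ (spread k s) + 2 * σ := by
          rw [show spread (k + 2) s =
              2 * (1 - 2 * s) * spread (k + 1) s - spread k s + 2 * s from rfl]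
          rw [map_add, map_sub, map_mul, map_mul, map_sub, map_mul, map_one,
            map_ofNat, ← hσ]
        rw [hφ]
        linear_combination (2 * (1 - 2 * σ) * x) * ih1 - x ^ 2 * ih0 +
          ((x ^ (k + 1)) ^ 2 + 1) * hx2
    exact fun n => (main n).1
  -- Frobenius: x^p = x or x^p = x'
  have h2p : (2 : GaloisField p 2) ^ p = 2 := by
    have h : (2 : GaloisField p 2) = φ 2 := (map_ofNat φ 2).symm
    rw [h, ← map_pow, ZMod.pow_card]
  have hcp : c ^ p = c := by rw [hc, ← map_pow, ZMod.pow_card]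
  have hrp : r ^ p = r ∨ r ^ p = -r := by
    have hsq : (r ^ p) ^ 2 = r ^ 2 := by
      calc (r ^ p) ^ 2 = (r * r) ^ p := by ring
        _ = φ ((s ^ 2 - s) ^ p) := by rw [hr, map_pow]
        _ = φ (s ^ 2 - s) := by rw [ZMod.pow_card]
        _ = r ^ 2 := by rw [← hr]; ring
    have hz : (r ^ p - r) * (r ^ p + r) = 0 := by linear_combination hsq
    rcases mul_eq_zero.mp hz with h | h
    · exact Or.inl (sub_eq_zero.mp h)
    · exact Or.inr (eq_neg_of_add_eq_zero_left h)
  have hxp : x ^ p = x ∨ x ^ p = x' := by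
    have hadd : x ^ p = c ^ p + (2 * r) ^ p := by
      rw [hxdef]; exact add_pow_char c (2 * r) p
    rcases hrp with h | h
    · left; rw [hadd, hcp, mul_pow, h2p, h, hxdef]
    · right; rw [hadd, hcp, mul_pow, h2p, h, hx'def]; ring
  have hone : x ^ (p - 1) = 1 ∨ x ^ (p + 1) = 1 := by
    rcases hxp with h | h
    · left
      have h1 : x * x ^ (p - 1) = x * 1 := by
        rw [mul_one, ← pow_succ']
        rw [show p - 1 + 1 = p by omega, h]
      exact mul_left_cancel₀ hx0 h1
    · right
      rw [pow_succ, h, mul_comm]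
      exact hxx'
  have hfin : IsOfFinOrder x := by
    rw [isOfFinOrder_iff_pow_eq_one]
    rcases hone with h | h
    · exact ⟨p - 1, by omega, h⟩
    · exact ⟨p + 1, by omega, h⟩
  refine ⟨orderOf x, hfin.orderOf_pos, ?_, ?_⟩
  · rcases hone with h | h
    · exact Or.inl (orderOf_dvd_of_pow_eq_one h)
    · exact Or.inr (orderOf_dvd_of_pow_eq_one h)
  · intro n
    have h4 : (4 : GaloisField p 2) ≠ 0 := by
      rw [show (4 : GaloisField p 2) = 2 * 2 by norm_num]
      exact mul_ne_zero h2K h2K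
    constructor
    · intro h
      have hk := key n
      rw [h, map_zero, zero_mul] at hk
      have hx1 : (x ^ n - 1) ^ 2 = 0 := by linear_combination hk
      have hx1' : x ^ n - 1 = 0 := pow_eq_zero_iff (by norm_num) |>.mp hx1
      rw [orderOf_dvd_iff_pow_eq_one]
      exact sub_eq_zero.mp hx1'
    · intro h
      have hxn : x ^ n = 1 := orderOf_dvd_iff_pow_eq_one.mp h
      have hk := key n
      rw [hxn] at hk
      simp only [sub_self, ne_eq, OfNat.ofNat_ne_zero, not_false_eq_true, zero_pow,
        neg_zero, mul_one] at hk
      have : φ (spread n s) = 0 := by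
        rcases mul_eq_zero.mp hk with h' | h'
        · exact h'
        · exact absurd h' h4
      exact hinj (by simpa using this)
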